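/- Let e be a transitive relation on a set E. Then e is square-free if and only if the poset Clop(e) of all clopen subsets of e, ordered by inclusion, is a lattice, i.e., every pair of clopen subsets of e has a least upper bound and a greatest lower bound within Clop(e). -/

import Mathlib

/-- A binary relation (as a set of pairs) is transitive. -/
def TransRel {E : Type*} (a : Set (E × E)) : Prop :=
  ∀ x y z : E, (x, y) ∈ a → (y, z) ∈ a → (x, z) ∈ a

/-- The transitive closure of a set of pairs. -/
def tcl {E : Type*} (a : Set (E × E)) : Set (E × E) :=
  {p | Relation.TransGen (fun u v => (u, v) ∈ a) p.1 p.2}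

/-- The interior of `a` relative to `e`. -/
def tint {E : Type*} (e a : Set (E × E)) : Set (E × E) :=
  e \ tcl (e \ a)

/-- `a` is a closed subset of `e`. -/
def IsClosedIn {E : Type*} (e a : Set (E × E)) : Prop :=
  a ⊆ e ∧ TransRel a

/-- `a` is an open subset of `e`. -/
def IsOpenIn {E : Type*} (e a : Set (E × E)) : Prop :=
  a ⊆ e ∧ TransRel (e \ a)

/-- `a` is a clopen subset of `e`. -/
def IsClopenIn {E : Type*} (e a : Set (E × E)) : Prop :=
  a ⊆ e ∧ TransRel a ∧ TransRel (e \ a)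

/-- `a` is a regular closed subset of `e`. -/
def RegClosed {E : Type*} (e a : Set (E × E)) : Prop :=
  a ⊆ e ∧ a = tcl (tint e a)

/-- The reflexive preordering `x ⊴ y` associated with `e`. -/
def rle {E : Type*} (e : Set (E × E)) (x y : E) : Prop :=
  (x, y) ∈ e ∨ x = y

/-- `x ≡ y`: `x ⊴ y` and `y ⊴ x`. -/
def eqv {E : Type*} (e : Set (E × E)) (x y : E) : Prop :=
  rle e x y ∧ rle e y x

/-- `e` is square-free. -/
def SqFree {E : Type*} (e : Set (E × E)) : Prop :=
  ∀ a b x y : E, (a, b) ∈ e → rle e a x → rle e x b → rle e a y → rle e y b →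
    rle e x y ∨ rle e y x

/-- The interval `[a,b] = {x | a ⊴ x ⊴ b}`. -/
def cce {E : Type*} (e : Set (E × E)) (a b : E) : Set E :=
  {x | rle e a x ∧ rle e x b}

/-- `(a,b,U) ∈ F(e)`. -/
def Ftriple {E : Type*} (e : Set (E × E)) (a b : E) (U : Set E) : Prop :=
  (a, b) ∈ e ∧ U ⊆ cce e a b ∧ (a ≠ b → a ∉ U ∧ b ∈ U)

/-- The clopen set `⟨a,b,U⟩ = e ∩ (({a} ∪ Uᶜ) × ({b} ∪ U))`. -/
def pji {E : Type*} (e : Set (E × E)) (a b : E) (U : Set E) : Set (E × E) :=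
  e ∩ ((({a} : Set E) ∪ (cce e a b \ U)) ×ˢ (({b} : Set E) ∪ U))

/-- The set `p₋` associated with `p = ⟨a,b,U⟩`: if `a ≠ b` it is
`p \ ([a] × [b])`, and if `a = b` it is `p \ {(a,a)}`. -/
def pminus {E : Type*} (e : Set (E × E)) (a b : E) (U : Set E) : Set (E × E) :=
  {z ∈ pji e a b U | ¬ ((a ≠ b ∧ eqv e z.1 a ∧ eqv e z.2 b) ∨ (a = b ∧ z = (a, a)))}

section aux
variable {E : Type*} {e : Set (E × E)}

lemma rle_trans' (he : TransRel e) {x y z : E} (h1 : rle e x y) (h2 : rle e y z) :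
    rle e x z := by
  rcases h1 with h1 | rfl
  · rcases h2 with h2 | rfl
    · exact Or.inl (he _ _ _ h1 h2)
    · exact Or.inl h1
  · exact h2

lemma tcl_min {W a : Set (E × E)} (hW : TransRel W) (haW : a ⊆ W) : tcl a ⊆ W := by
  rintro ⟨u, w⟩ h
  simp only [tcl, Set.mem_setOf_eq] at h
  induction h with
  | single h' => exact haW h'
  | tail _ h2 ih => exact hW _ _ _ ih (haW h2)


lemma tcl_transrel {a : Set (E × E)} : TransRel (tcl a) := by
  intro u v w h1 h2
  exact Relation.TransGen.trans h1 h2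

lemma mem_tcl_of_mem {a : Set (E × E)} {p : E × E} (h : p ∈ a) : p ∈ tcl a :=
  Relation.TransGen.single (show ((p.1 : E), p.2) ∈ a by simpa)

lemma tcl_single {a : Set (E × E)} {u w : E} (h : (u, w) ∈ a) : (u, w) ∈ tcl a :=
  Relation.TransGen.single h

lemma tcl_head {a : Set (E × E)} {u v w : E} (h : (u, v) ∈ a)
    (h2 : Relation.TransGen (fun p q : E => (p, q) ∈ a) v w) : (u, w) ∈ tcl a :=
  Relation.TransGen.head h h2

lemma key (he : TransRel e) (hsq : SqFree e) {c d : Set (E × E)}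
    (hc : IsClopenIn e c) (hd : IsClopenIn e d) :
    TransRel (e \ tcl (c ∪ d)) := by
  intro u v w h1 h2
  have hte : tcl (c ∪ d) ⊆ e := tcl_min he (Set.union_subset hc.1 hd.1)
  refine ⟨he _ _ _ h1.1 h2.1, fun hT => ?_⟩
  have huw : (u, w) ∈ e := he _ _ _ h1.1 h2.1
  have hT' : Relation.TransGen (fun p q : E => (p, q) ∈ c ∪ d) u w := hT
  have main : ∀ z, Relation.TransGen (fun p q : E => (p, q) ∈ c ∪ d) z w →
      rle e u z → rle e z v →
      (z, v) ∈ tcl (c ∪ d) ∨ (v, w) ∈ tcl (c ∪ d) := by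
    intro z hz
    induction hz using Relation.TransGen.head_induction_on with
    | single h' =>
      rename_i a
      intro hua hav
      rcases hav with hav | rfl
      · by_cases hvw : v = w
        · subst hvw
          exact Or.inl (tcl_single h')
        · have hvwe : (v, w) ∈ e := h2.1
          rcases h' with h'c | h'd
          · by_cases hc1 : (a, v) ∈ c
            · exact Or.inl (tcl_single (Or.inl hc1))
            · have hc2 : (v, w) ∈ c := by
                by_contra hc2
                exact (hc.2.2 a v w ⟨hav, hc1⟩ ⟨hvwe, hc2⟩).2 h'c
              exact Or.inr (tcl_single (Or.inl hc2))
          · by_cases hd1 : (a, v) ∈ d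
            · exact Or.inl (tcl_single (Or.inr hd1))
            · have hd2 : (v, w) ∈ d := by
                by_contra hd2
                exact (hd.2.2 a v w ⟨hav, hd1⟩ ⟨hvwe, hd2⟩).2 h'd
              exact Or.inr (tcl_single (Or.inr hd2))
      · exact Or.inr (tcl_single h')
    | head h' hrest ihP =>
      rename_i a a'
      intro hua hav
      have ha'e : (a, a') ∈ e := Set.union_subset hc.1 hd.1 h'
      have hua' : rle e u a' := rle_trans' he hua (Or.inl ha'e)
      have ha'w : rle e a' w := Or.inl (hte (show (a', w) ∈ tcl (c ∪ d) from hrest))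
      have hcomp := hsq u w v a' huw (rle_trans' he hua hav) (Or.inl h2.1) hua' ha'w
      rcases hcomp with hva' | ha'v
      · by_cases hveq : v = a'
        · subst hveq
          exact Or.inl (tcl_single h')
        · rcases hav with hav | rfl
          · have hva'e : (v, a') ∈ e := hva'.resolve_right hveq
            rcases h' with h'c | h'd
            · by_cases hc1 : (a, v) ∈ c
              · exact Or.inl (tcl_single (Or.inl hc1))
              · have hc2 : (v, a') ∈ c := by
                  by_contra hc2
                  exact (hc.2.2 a v a' ⟨hav, hc1⟩ ⟨hva'e, hc2⟩).2 h'c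
                exact Or.inr (tcl_head (Or.inl hc2) hrest)
            · by_cases hd1 : (a, v) ∈ d
              · exact Or.inl (tcl_single (Or.inr hd1))
              · have hd2 : (v, a') ∈ d := by
                  by_contra hd2
                  exact (hd.2.2 a v a' ⟨hav, hd1⟩ ⟨hva'e, hd2⟩).2 h'd
                exact Or.inr (tcl_head (Or.inr hd2) hrest)
          · exact Or.inr (tcl_head h' hrest)
      · rcases ihP hua' ha'v with h | h
        · exact Or.inl (tcl_head h' h)
        · exact Or.inr h
  rcases main u hT' (Or.inr rfl) (Or.inl h1.1) with h | h
  · exact h1.2 h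
  · exact h2.2 h
end aux

lemma prod_clopen {E : Type*} {e : Set (E × E)} (he : TransRel e) (A B : Set E)
    (hmid : ∀ u v w : E, u ∈ A → w ∈ B → (u, v) ∈ e → (v, w) ∈ e → v ∈ A ∪ B) :
    IsClopenIn e (e ∩ A ×ˢ B) := by
  refine ⟨Set.inter_subset_left, ?_, ?_⟩
  · rintro u v w ⟨h1e, h1A, h1B⟩ ⟨h2e, h2A, h2B⟩
    exact ⟨he _ _ _ h1e h2e, h1A, h2B⟩
  · rintro u v w ⟨h1e, h1n⟩ ⟨h2e, h2n⟩
    refine ⟨he _ _ _ h1e h2e, fun hmem => ?_⟩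
    obtain ⟨-, huA, hwB⟩ := hmem
    rcases hmid u v w huA hwB h1e h2e with hvA | hvB
    · exact h2n ⟨h2e, hvA, hwB⟩
    · exact h1n ⟨h1e, huA, hvB⟩

lemma compl_clopen {E : Type*} {e x : Set (E × E)} (hx : IsClopenIn e x) :
    IsClopenIn e (e \ x) :=
  ⟨Set.diff_subset, hx.2.2, by rw [Set.diff_diff_cancel_left hx.1]; exact hx.2.1⟩

/-- `e` is square-free iff the poset of clopen subsets of `e` is a lattice. -/
theorem squareFree_iff_clopen_lattice {E : Type*} (e : Set (E × E)) (he : TransRel e) :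
    SqFree e ↔
      ∀ x y : Set (E × E), IsClopenIn e x → IsClopenIn e y →
        (∃ s, IsClopenIn e s ∧ x ⊆ s ∧ y ⊆ s ∧
          ∀ w, IsClopenIn e w → x ⊆ w → y ⊆ w → s ⊆ w) ∧
        (∃ m, IsClopenIn e m ∧ m ⊆ x ∧ m ⊆ y ∧
          ∀ w, IsClopenIn e w → w ⊆ x → w ⊆ y → w ⊆ m) := by
  constructor
  · intro hsq x y hx hy
    constructor
    · refine ⟨tcl (x ∪ y), ⟨tcl_min he (Set.union_subset hx.1 hy.1), tcl_transrel,
        key he hsq hx hy⟩, fun p hp => mem_tcl_of_mem (Or.inl hp),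
        fun p hp => mem_tcl_of_mem (Or.inr hp), fun w hw hxw hyw =>
        tcl_min hw.2.1 (Set.union_subset hxw hyw)⟩
    · have hte : tcl ((e \ x) ∪ (e \ y)) ⊆ e :=
        tcl_min he (Set.union_subset Set.diff_subset Set.diff_subset)
      refine ⟨e \ tcl ((e \ x) ∪ (e \ y)),
        ⟨Set.diff_subset, key he hsq (compl_clopen hx) (compl_clopen hy),
          by rw [Set.diff_diff_cancel_left hte]; exact tcl_transrel⟩, ?_, ?_, ?_⟩
      · rintro p ⟨hpe, hpt⟩
        by_contra hpx
        exact hpt (mem_tcl_of_mem (Or.inl ⟨hpe, hpx⟩))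
      · rintro p ⟨hpe, hpt⟩
        by_contra hpy
        exact hpt (mem_tcl_of_mem (Or.inr ⟨hpe, hpy⟩))
      · intro w hw hwx hwy p hpw
        refine ⟨hw.1 hpw, fun hpt => ?_⟩
        have hsub : tcl ((e \ x) ∪ (e \ y)) ⊆ e \ w :=
          tcl_min hw.2.2 (Set.union_subset (Set.diff_subset_diff_right hwx)
            (Set.diff_subset_diff_right hwy))
        exact (hsub hpt).2 hpw
  · intro hl a b x y hab hax hxb hay hyb
    by_contra hcon
    push_neg at hcon
    obtain ⟨hxy, hyx⟩ := hcon
    have hr : ∀ {p q r : E}, rle e p q → rle e q r → rle e p r :=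
      fun h1 h2 => rle_trans' he h1 h2
    have hxa : ¬ rle e x a := fun h => hxy (hr h hay)
    have hbx : ¬ rle e b x := fun h => hyx (hr hyb h)
    have hya : ¬ rle e y a := fun h => hyx (hr h hax)
    have hby : ¬ rle e b y := fun h => hxy (hr hxb h)
    have hba : ¬ rle e b a := fun h => hxy (hr hxb (hr h hay))
    have haxe : (a, x) ∈ e := by
      rcases hax with h | h
      · exact h
      · exact absurd (h ▸ hay) hxy
    have hxbe : (x, b) ∈ e := by
      rcases hxb with h | h
      · exact h
      · exact absurd (h ▸ hyb) hyx
    have haye : (a, y) ∈ e := by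
      rcases hay with h | h
      · exact h
      · exact absurd (h ▸ hax) hyx
    have hybe : (y, b) ∈ e := by
      rcases hyb with h | h
      · exact h
      · exact absurd (h ▸ hxb) hxy
    set Ap : Set E := {z | rle e a z ∧ rle e z x ∧ ¬ rle e x z} with hAp
    set Bp : Set E := {z | rle e a z ∧ rle e z x ∧ rle e x z} with hBp
    set Aq : Set E := {z | rle e x z ∧ rle e z b ∧ ¬ rle e b z} with hAq
    set Bq : Set E := {z | rle e x z ∧ rle e z b ∧ rle e b z} with hBq
    set A1 : Set E := {z | rle e a z ∧ rle e z b ∧ ¬ rle e b z} with hA1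
    set B1 : Set E := {z | rle e x z ∧ rle e z b} with hB1
    set A2 : Set E := {z | rle e a z ∧ rle e z b ∧ (rle e z x ∨ (rle e x z ∧ ¬ rle e b z))} with hA2
    set B2 : Set E := {z | rle e z b ∧ ¬ rle e z a} with hB2
    have hp : IsClopenIn e (e ∩ Ap ×ˢ Bp) := by
      refine prod_clopen he Ap Bp fun u v w hu hw h1 h2 => ?_
      have h3 : rle e a v := hr hu.1 (Or.inl h1)
      have h4 : rle e v x := hr (Or.inl h2) hw.2.1
      by_cases h5 : rle e x v
      · exact Or.inr ⟨h3, h4, h5⟩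
      · exact Or.inl ⟨h3, h4, h5⟩
    have hq : IsClopenIn e (e ∩ Aq ×ˢ Bq) := by
      refine prod_clopen he Aq Bq fun u v w hu hw h1 h2 => ?_
      have h3 : rle e x v := hr hu.1 (Or.inl h1)
      have h4 : rle e v b := hr (Or.inl h2) hw.2.1
      by_cases h5 : rle e b v
      · exact Or.inr ⟨h3, h4, h5⟩
      · exact Or.inl ⟨h3, h4, h5⟩
    have hs1 : IsClopenIn e (e ∩ A1 ×ˢ B1) := by
      refine prod_clopen he A1 B1 fun u v w hu hw h1 h2 => ?_
      have h3 : rle e a v := hr hu.1 (Or.inl h1)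
      have h4 : rle e v b := hr (Or.inl h2) hw.2
      by_cases h5 : rle e b v
      · exact Or.inr ⟨hr hxb h5, h4⟩
      · exact Or.inl ⟨h3, h4, h5⟩
    have hs2 : IsClopenIn e (e ∩ A2 ×ˢ B2) := by
      refine prod_clopen he A2 B2 fun u v w hu hw h1 h2 => ?_
      have h4 : rle e v b := hr (Or.inl h2) hw.1
      by_cases h5 : rle e v a
      · exact Or.inl ⟨hr hu.1 (Or.inl h1), h4, Or.inl (hr h5 hax)⟩
      · exact Or.inr ⟨h4, h5⟩
    have hps1 : e ∩ Ap ×ˢ Bp ⊆ e ∩ A1 ×ˢ B1 := by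
      rintro ⟨u, w⟩ ⟨hpe, hu, hw⟩
      exact ⟨hpe, ⟨hu.1, hr hu.2.1 hxb, fun h => hu.2.2 (hr hxb h)⟩,
        hw.2.2, hr hw.2.1 hxb⟩
    have hps2 : e ∩ Ap ×ˢ Bp ⊆ e ∩ A2 ×ˢ B2 := by
      rintro ⟨u, w⟩ ⟨hpe, hu, hw⟩
      exact ⟨hpe, ⟨hu.1, hr hu.2.1 hxb, Or.inl hu.2.1⟩,
        hr hw.2.1 hxb, fun h => hxa (hr hw.2.2 h)⟩
    have hqs1 : e ∩ Aq ×ˢ Bq ⊆ e ∩ A1 ×ˢ B1 := by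
      rintro ⟨u, w⟩ ⟨hpe, hu, hw⟩
      exact ⟨hpe, ⟨hr hax hu.1, hu.2.1, hu.2.2⟩, hw.1, hw.2.1⟩
    have hqs2 : e ∩ Aq ×ˢ Bq ⊆ e ∩ A2 ×ˢ B2 := by
      rintro ⟨u, w⟩ ⟨hpe, hu, hw⟩
      exact ⟨hpe, ⟨hr hax hu.1, hu.2.1, Or.inr ⟨hu.1, hu.2.2⟩⟩,
        hw.2.1, fun h => hba (hr hw.2.2 h)⟩
    obtain ⟨⟨s, hsc, hpss, hqss, hmin⟩, -⟩ := hl (e ∩ Ap ×ˢ Bp) (e ∩ Aq ×ˢ Bq) hp hq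
    have hss1 : s ⊆ e ∩ A1 ×ˢ B1 := hmin _ hs1 hps1 hqs1
    have hss2 : s ⊆ e ∩ A2 ×ˢ B2 := hmin _ hs2 hps2 hqs2
    have haxs : (a, x) ∈ s :=
      hpss ⟨haxe, ⟨Or.inr rfl, hax, hxa⟩, ⟨hax, Or.inr rfl, Or.inr rfl⟩⟩
    have hxbs : (x, b) ∈ s :=
      hqss ⟨hxbe, ⟨Or.inr rfl, hxb, hbx⟩, ⟨hxb, Or.inr rfl, Or.inr rfl⟩⟩
    have habs : (a, b) ∈ s := hsc.2.1 a x b haxs hxbs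
    have hays : (a, y) ∉ s := fun h => hxy (show rle e x y from (hss1 h).2.2.1)
    have hybs : (y, b) ∉ s := fun h => by
      rcases (hss2 h).2.1.2.2 with h' | h'
      · exact hyx h'
      · exact hxy h'.1
    have : (a, b) ∈ e \ s := hsc.2.2 a y b ⟨haye, hays⟩ ⟨hybe, hybs⟩
    exact this.2 habs
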